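/- For every integer n ≥ 0, F(1, 1, n+2, 1/2) = (n+1) ( ψ((n+2)/2) − ψ((n+1)/2) ), where ψ = Γ'/Γ is the digamma function. -/

import Mathlib

open scoped BigOperators

/-- The Gauss hypergeometric series `F(1,1,n+2,z)` at a real argument. -/
noncomputable def hypF (a b c : ℝ) (z : ℝ) : ℝ :=
  ∑' k : ℕ, ((ascPochhammer ℝ k).eval a * (ascPochhammer ℝ k).eval b /
      ((ascPochhammer ℝ k).eval c * (Nat.factorial k : ℝ))) * z ^ k

/-- The digamma function `ψ = Γ'/Γ`. -/
noncomputable def digamma (x : ℝ) : ℝ := deriv Real.Gamma x / Real.Gamma x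

namespace Stmt19Aux

/-- The terms of the series `F(1,1,n+2,1/2)`. -/
noncomputable def v (n k : ℕ) : ℝ :=
  (k.factorial : ℝ) * ((n + 1).factorial : ℝ) / ((n + 1 + k).factorial : ℝ) * (1 / 2) ^ k

lemma fac_pos (m : ℕ) : (0 : ℝ) < (m.factorial : ℝ) := by
  exact_mod_cast m.factorial_pos

lemma v_nonneg (n k : ℕ) : 0 ≤ v n k := by
  unfold v; positivity

lemma v_le (n k : ℕ) : v n k ≤ (1 / 2) ^ k := by
  unfold v
  have h : (k.factorial : ℝ) * ((n + 1).factorial : ℝ) ≤ ((n + 1 + k).factorial : ℝ) := by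
    have := Nat.factorial_mul_factorial_dvd_factorial_add (n + 1) k
    have hle : (n + 1).factorial * k.factorial ≤ (n + 1 + k).factorial :=
      Nat.le_of_dvd (Nat.factorial_pos _) this
    calc (k.factorial : ℝ) * ((n + 1).factorial : ℝ)
        = (((n + 1).factorial * k.factorial : ℕ) : ℝ) := by push_cast; ring
      _ ≤ _ := by exact_mod_cast hle
  have h2 : (k.factorial : ℝ) * ((n + 1).factorial : ℝ) / ((n + 1 + k).factorial : ℝ) ≤ 1 :=
    (div_le_one (fac_pos _)).mpr h
  calc (k.factorial : ℝ) * ((n + 1).factorial : ℝ) / ((n + 1 + k).factorial : ℝ) * (1 / 2) ^ k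
      ≤ 1 * (1 / 2) ^ k := by
        apply mul_le_mul_of_nonneg_right h2; positivity
    _ = (1 / 2) ^ k := one_mul _

lemma summable_v (n : ℕ) : Summable (v n) :=
  Summable.of_nonneg_of_le (v_nonneg n) (v_le n)
    (summable_geometric_of_lt_one (by norm_num) (by norm_num))

lemma v_zero (n : ℕ) : v n 0 = 1 := by
  unfold v
  simp [div_self (fac_pos (n + 1)).ne']

lemma v_succ_n (n k : ℕ) :
    v (n + 1) k = ((n : ℝ) + 2) / ((n : ℝ) + (k : ℝ) + 2) * v n k := by
  unfold v
  have h1 : ((n + 1 + 1 + k).factorial : ℝ) = ((n : ℝ) + (k : ℝ) + 2) * ((n + 1 + k).factorial : ℝ) := by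
    have : n + 1 + 1 + k = (n + 1 + k) + 1 := by ring
    rw [this, Nat.factorial_succ]; push_cast; ring
  have h2 : ((n + 1 + 1).factorial : ℝ) = ((n : ℝ) + 2) * ((n + 1).factorial : ℝ) := by
    rw [Nat.factorial_succ]; push_cast; ring
  rw [h1, h2]
  have hk : ((n : ℝ) + (k : ℝ) + 2) ≠ 0 := by positivity
  field_simp

lemma v_sub_succ (n k : ℕ) :
    v n k - v n (k + 1) =
      v n k * ((2 * (n : ℝ) + (k : ℝ) + 3) / (2 * ((n : ℝ) + (k : ℝ) + 2))) := by
  have h1 : v n (k + 1) = v n k * (((k : ℝ) + 1) / (2 * ((n : ℝ) + (k : ℝ) + 2))) := by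
    unfold v
    have hf : ((n + 1 + (k + 1)).factorial : ℝ)
        = ((n : ℝ) + (k : ℝ) + 2) * ((n + 1 + k).factorial : ℝ) := by
      have : n + 1 + (k + 1) = (n + 1 + k) + 1 := by ring
      rw [this, Nat.factorial_succ]; push_cast; ring
    have hkf : ((k + 1).factorial : ℝ) = ((k : ℝ) + 1) * (k.factorial : ℝ) := by
      rw [Nat.factorial_succ]; push_cast; ring
    rw [hf, hkf, pow_succ]
    have hk : ((n : ℝ) + (k : ℝ) + 2) ≠ 0 := by positivity
    field_simp
  rw [h1]
  have hk : ((n : ℝ) + (k : ℝ) + 2) ≠ 0 := by positivity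
  field_simp
  ring

lemma v_tendsto_zero (n : ℕ) : Filter.Tendsto (v n) Filter.atTop (nhds 0) := by
  apply squeeze_zero (v_nonneg n) (v_le n)
  exact tendsto_pow_atTop_nhds_zero_of_lt_one (by norm_num) (by norm_num)

/-- The telescoping sum. -/
lemma hasSum_key (n : ℕ) :
    HasSum (fun k : ℕ => v n k * ((2 * (n : ℝ) + (k : ℝ) + 3) / ((n : ℝ) + (k : ℝ) + 2))) 2 := by
  have hterm : ∀ k : ℕ, v n k * ((2 * (n : ℝ) + (k : ℝ) + 3) / ((n : ℝ) + (k : ℝ) + 2))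
      = 2 * (v n k - v n (k + 1)) := by
    intro k
    rw [v_sub_succ]
    have hk : ((n : ℝ) + (k : ℝ) + 2) ≠ 0 := by positivity
    field_simp
  have hnonneg : ∀ k : ℕ, 0 ≤ v n k * ((2 * (n : ℝ) + (k : ℝ) + 3) / ((n : ℝ) + (k : ℝ) + 2)) := by
    intro k
    have := v_nonneg n k
    positivity
  rw [hasSum_iff_tendsto_nat_of_nonneg hnonneg]
  have hsum : ∀ K : ℕ, (∑ k ∈ Finset.range K,
      v n k * ((2 * (n : ℝ) + (k : ℝ) + 3) / ((n : ℝ) + (k : ℝ) + 2)))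
      = 2 * (v n 0 - v n K) := by
    intro K
    calc (∑ k ∈ Finset.range K,
        v n k * ((2 * (n : ℝ) + (k : ℝ) + 3) / ((n : ℝ) + (k : ℝ) + 2)))
        = ∑ k ∈ Finset.range K, 2 * (v n k - v n (k + 1)) := by
          exact Finset.sum_congr rfl fun k _ => hterm k
      _ = 2 * ∑ k ∈ Finset.range K, (v n k - v n (k + 1)) := by rw [Finset.mul_sum]
      _ = 2 * (v n 0 - v n K) := by rw [Finset.sum_range_sub' (v n)]
  simp only [hsum, v_zero]
  have : Filter.Tendsto (fun K : ℕ => 2 * (1 - v n K)) Filter.atTop (nhds (2 * (1 - 0))) :=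
    (tendsto_const_nhds.sub (v_tendsto_zero n)).const_mul 2
  simpa using this

/-- `hypF 1 1 (n+2) (1/2)` equals the sum of `v n`. -/
lemma hypF_eq (n : ℕ) : hypF 1 1 ((n : ℝ) + 2) (1 / 2) = ∑' k, v n k := by
  unfold hypF
  congr 1
  funext k
  have h1 : (ascPochhammer ℝ k).eval (1 : ℝ) = (k.factorial : ℝ) := by
    exact_mod_cast ascPochhammer_eval_one ℝ k
  have h2 : ((n + 1).factorial : ℝ) * (ascPochhammer ℝ k).eval ((n : ℝ) + 2)
      = ((n + 1 + k).factorial : ℝ) := by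
    have h0 := factorial_mul_ascPochhammer ℝ (n + 1) k
    have harg : ((n + 1 : ℕ) : ℝ) + 1 = (n : ℝ) + 2 := by push_cast; ring
    rw [harg] at h0
    exact h0
  have h3 : (ascPochhammer ℝ k).eval ((n : ℝ) + 2)
      = ((n + 1 + k).factorial : ℝ) / ((n + 1).factorial : ℝ) := by
    field_simp [← h2]
    rw [← h2]; ring
  rw [h1, h3]
  unfold v
  have hf1 : (k.factorial : ℝ) ≠ 0 := (fac_pos k).ne'
  have hf2 : ((n + 1).factorial : ℝ) ≠ 0 := (fac_pos _).ne'
  have hf3 : ((n + 1 + k).factorial : ℝ) ≠ 0 := (fac_pos _).ne'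
  field_simp

/-- The recurrence for the hypergeometric values. -/
lemma hypF_rec (n : ℕ) :
    hypF 1 1 (((n : ℕ) + 1 : ℕ) + 2 : ℝ) (1 / 2)
      = ((n : ℝ) + 2) / ((n : ℝ) + 1) * (2 - hypF 1 1 ((n : ℝ) + 2) (1 / 2)) := by
  have key := hasSum_key n
  have hv := summable_v n
  have hv1 := summable_v (n + 1)
  have hsplit : ∀ k : ℕ, v n k * ((2 * (n : ℝ) + (k : ℝ) + 3) / ((n : ℝ) + (k : ℝ) + 2))
      = v n k + ((n : ℝ) + 1) / ((n : ℝ) + 2) * v (n + 1) k := by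
    intro k
    rw [v_succ_n]
    have hk : ((n : ℝ) + (k : ℝ) + 2) ≠ 0 := by positivity
    have hn2 : ((n : ℝ) + 2) ≠ 0 := by positivity
    field_simp
    ring
  have key2 : HasSum (fun k : ℕ => v n k + ((n : ℝ) + 1) / ((n : ℝ) + 2) * v (n + 1) k) 2 := by
    apply key.congr_fun
    intro k
    exact (hsplit k).symm
  have hsum2 : HasSum (fun k : ℕ => ((n : ℝ) + 1) / ((n : ℝ) + 2) * v (n + 1) k)
      (((n : ℝ) + 1) / ((n : ℝ) + 2) * ∑' k, v (n + 1) k) := hv1.hasSum.mul_left _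
  have hsum1 : HasSum (v n) (∑' k, v n k) := hv.hasSum
  have hadd := hsum1.add hsum2
  have h2 : (∑' k, v n k) + ((n : ℝ) + 1) / ((n : ℝ) + 2) * ∑' k, v (n + 1) k = 2 :=
    hadd.unique key2
  have e1 : hypF 1 1 (((n : ℕ) + 1 : ℕ) + 2 : ℝ) (1 / 2) = ∑' k, v (n + 1) k := by
    have := hypF_eq (n + 1)
    push_cast at this ⊢
    convert this using 3
  have hn1 : ((n : ℝ) + 1) ≠ 0 := by positivity
  have hn2 : ((n : ℝ) + 2) ≠ 0 := by positivity
  have h3 : ((n : ℝ) + 1) / ((n : ℝ) + 2) * (∑' k, v (n + 1) k) = 2 - ∑' k, v n k := by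
    linarith
  rw [e1, hypF_eq n, ← h3]
  field_simp

/-- Base case: `hypF 1 1 2 (1/2) = 2 log 2`. -/
lemma hypF_base : hypF 1 1 (((0 : ℕ) : ℝ) + 2) (1 / 2) = 2 * Real.log 2 := by
  have h := Real.hasSum_pow_div_log_of_abs_lt_one (x := 1 / 2) (by rw [abs_of_pos] <;> norm_num)
  have hlog : -Real.log (1 - 1 / 2) = Real.log 2 := by
    rw [show (1 : ℝ) - 1 / 2 = 2⁻¹ by norm_num, Real.log_inv]; ring
  rw [hlog] at h
  have h2 : HasSum (fun k : ℕ => v 0 k) (2 * Real.log 2) := by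
    have := h.mul_left 2
    apply this.congr_fun
    intro k
    unfold v
    simp only [Nat.zero_add, Nat.factorial_one, Nat.cast_one]
    have : ((0 + 1 + k).factorial : ℝ) = ((k : ℝ) + 1) * (k.factorial : ℝ) := by
      have : 0 + 1 + k = k + 1 := by ring
      rw [this, Nat.factorial_succ]; push_cast; ring
    rw [this]
    have hk1 : ((k : ℝ) + 1) ≠ 0 := by positivity
    have hkf : (k.factorial : ℝ) ≠ 0 := (fac_pos k).ne'
    rw [pow_succ]
    field_simp
  rw [hypF_eq 0]
  exact h2.tsum_eq

lemma digamma_add_one {x : ℝ} (hx : 0 < x) : digamma (x + 1) = digamma x + 1 / x := by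
  have hd : DifferentiableAt ℝ Real.Gamma x :=
    Real.differentiableAt_Gamma fun m => ((neg_nonpos.mpr m.cast_nonneg).trans_lt hx).ne'
  have hd1 : DifferentiableAt ℝ Real.Gamma (x + 1) :=
    Real.differentiableAt_Gamma fun m => by
      have : (0 : ℝ) < x + 1 := by linarith
      exact ((neg_nonpos.mpr m.cast_nonneg).trans_lt this).ne'
  have hG : Real.Gamma (x + 1) = x * Real.Gamma x := Real.Gamma_add_one hx.ne'
  have hGpos : 0 < Real.Gamma x := Real.Gamma_pos_of_pos hx
  -- derivative identity
  have h1 : HasDerivAt (fun y => Real.Gamma (y + 1)) (deriv Real.Gamma (x + 1)) x := by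
    have := (hd1.hasDerivAt).comp_add_const x 1
    exact this
  have h2 : HasDerivAt (fun y => y * Real.Gamma y)
      (Real.Gamma x + x * deriv Real.Gamma x) x := by
    have := (hasDerivAt_id' x).mul hd.hasDerivAt
    simp only [one_mul] at this; exact this
  have heq : (fun y => Real.Gamma (y + 1)) =ᶠ[nhds x] fun y => y * Real.Gamma y := by
    filter_upwards [eventually_gt_nhds hx] with y hy
    exact Real.Gamma_add_one hy.ne'
  have hderiv : deriv Real.Gamma (x + 1) = Real.Gamma x + x * deriv Real.Gamma x :=
    (h1.congr_of_eventuallyEq heq.symm).unique h2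
  unfold digamma
  rw [hderiv, hG]
  have hx' : x ≠ 0 := hx.ne'
  field_simp
  ring

lemma digamma_one_sub_half : digamma 1 - digamma (1 / 2) = 2 * Real.log 2 := by
  have h1 : deriv Real.Gamma 1 = -Real.eulerMascheroniConstant :=
    Real.hasDerivAt_Gamma_one.deriv
  have h2 : deriv Real.Gamma (1 / 2)
      = -Real.sqrt Real.pi * (Real.eulerMascheroniConstant + 2 * Real.log 2) :=
    Real.hasDerivAt_Gamma_one_half.deriv
  have hpi : (0 : ℝ) < Real.sqrt Real.pi := Real.sqrt_pos.mpr Real.pi_pos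
  unfold digamma
  rw [h1, h2, Real.Gamma_one, Real.Gamma_one_half_eq]
  field_simp
  ring

end Stmt19Aux

open Stmt19Aux in
/-- For every `n ≥ 0`, `F(1,1,n+2,1/2) = (n+1)(ψ((n+2)/2) − ψ((n+1)/2))`. -/
theorem stmt_19 (n : ℕ) :
    hypF 1 1 ((n : ℝ) + 2) (1 / 2) =
      ((n : ℝ) + 1) * (digamma (((n : ℝ) + 2) / 2) - digamma (((n : ℝ) + 1) / 2)) := by
  induction n with
  | zero =>
      have hb : hypF 1 1 (((0 : ℕ) : ℝ) + 2) (1 / 2) = 2 * Real.log 2 := hypF_base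
      have hd := digamma_one_sub_half
      norm_num at hb ⊢
      rw [hb]
      linarith
  | succ n ih =>
      have hrec := hypF_rec n
      have hdig : digamma (((n : ℝ) + 1) / 2 + 1) = digamma (((n : ℝ) + 1) / 2) + 2 / ((n : ℝ) + 1) := by
        have hpos : (0 : ℝ) < ((n : ℝ) + 1) / 2 := by positivity
        rw [digamma_add_one hpos]
        congr 1
        rw [one_div_div]
      have e3 : (((n : ℕ) + 1 : ℕ) : ℝ) + 2 = ((n : ℝ) + 1) + 2 := by push_cast; ring
      have e4 : ((((n : ℕ) + 1 : ℕ) : ℝ) + 2) / 2 = ((n : ℝ) + 1) / 2 + 1 := by push_cast; ring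
      have e5 : ((((n : ℕ) + 1 : ℕ) : ℝ) + 1) / 2 = ((n : ℝ) + 2) / 2 := by push_cast; ring
      rw [e4, e5, hdig]
      have hF : hypF 1 1 ((((n : ℕ) + 1 : ℕ) : ℝ) + 2) (1 / 2)
          = ((n : ℝ) + 2) / ((n : ℝ) + 1) * (2 - hypF 1 1 ((n : ℝ) + 2) (1 / 2)) := by
        convert hrec using 3
      rw [hF, ih]
      have hn1 : ((n : ℝ) + 1) ≠ 0 := by positivity
      push_cast
      field_simp
      ring
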